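/- For the Johnson graph J(n,d) (2 ≤ 2d ≤ n) with unit resistors, the effective resistance between adjacent vertices equals 2(n! − d!(n−d)!)/(d(n−d)·n!). -/

import Mathlib

open Matrix

/-- The Johnson graph `J(n,d)`: vertices are the `d`-element subsets of `{1,…,n}`,
two subsets adjacent when their intersection has exactly `d - 1` elements. -/
def johnsonGraph (n d : ℕ) : SimpleGraph {s : Finset (Fin n) // s.card = d} where
  Adj s t := (s.1 ∩ t.1).card = d - 1 ∧ s ≠ t
  symm := ⟨fun s t h => ⟨by rw [Finset.inter_comm]; exact h.1, h.2.symm⟩⟩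
  loopless := ⟨fun s h => h.2 rfl⟩

instance (n d : ℕ) : DecidableRel (johnsonGraph n d).Adj := fun s t =>
  show Decidable ((s.1 ∩ t.1).card = d - 1 ∧ s ≠ t) from instDecidableAnd

lemma johnsonGraph_adj {n d : ℕ} {s t : {s : Finset (Fin n) // s.card = d}} :
    (johnsonGraph n d).Adj s t ↔ (s.1 ∩ t.1).card = d - 1 ∧ s ≠ t := Iff.rfl

/-- The four Moore–Penrose pseudoinverse conditions for real matrices. -/
def IsMoorePenrose {V : Type*} [Fintype V] [DecidableEq V] (L Lp : Matrix V V ℝ) : Prop :=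
  L * Lp * L = L ∧ Lp * L * Lp = Lp ∧ (L * Lp)ᵀ = L * Lp ∧ (Lp * L)ᵀ = Lp * L

/-- Effective resistance between two nodes, from the pseudoinverse of the Laplacian. -/
def effRes {V : Type*} (Lp : Matrix V V ℝ) (α β : V) : ℝ :=
  Lp α α + Lp β β - 2 * Lp α β

/-! ### Uniqueness of the Moore–Penrose pseudoinverse -/

theorem mp_unique {V : Type*} [Fintype V] [DecidableEq V] {L X Y : Matrix V V ℝ}
    (hX : IsMoorePenrose L X) (hY : IsMoorePenrose L Y) : X = Y := by
  obtain ⟨hX1, hX2, hX3, hX4⟩ := hX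
  obtain ⟨hY1, hY2, hY3, hY4⟩ := hY
  have e1 : X = X * L * Y := by
    calc X = X * (L * X) := by rw [← Matrix.mul_assoc, hX2]
    _ = X * (L * X)ᵀ := by rw [hX3]
    _ = X * ((L * Y) * (L * X))ᵀ := by
          have h : (L * Y) * (L * X) = L * X := by
            have : (L * Y) * (L * X) = (L * Y * L) * X := by noncomm_ring
            rw [this, hY1]
          rw [h]
    _ = X * ((L * X)ᵀ * (L * Y)ᵀ) := by rw [Matrix.transpose_mul]
    _ = X * ((L * X) * (L * Y)) := by rw [hX3, hY3]
    _ = (X * L * X) * (L * Y) := by noncomm_ring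
    _ = X * L * Y := by rw [hX2]; noncomm_ring
  have e2 : Y = X * L * Y := by
    calc Y = (Y * L) * Y := by rw [hY2]
    _ = (Y * L)ᵀ * Y := by rw [hY4]
    _ = ((Y * L) * (X * L))ᵀ * Y := by
          have h : (Y * L) * (X * L) = Y * L := by
            have : (Y * L) * (X * L) = Y * (L * X * L) := by noncomm_ring
            rw [this, hX1]
          rw [h]
    _ = ((X * L)ᵀ * (Y * L)ᵀ) * Y := by rw [Matrix.transpose_mul]
    _ = ((X * L) * (Y * L)) * Y := by rw [hX4, hY4]
    _ = (X * L) * ((Y * L) * Y) := by noncomm_ring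
    _ = X * L * Y := by rw [hY2]
  rw [e1, ← e2]

theorem mp_submatrix {V : Type*} [Fintype V] [DecidableEq V] {L Lp : Matrix V V ℝ}
    (h : IsMoorePenrose L Lp) (e : V ≃ V) (hL : L.submatrix e e = L) :
    IsMoorePenrose L (Lp.submatrix e e) := by
  obtain ⟨h1, h2, h3, h4⟩ := h
  refine ⟨?_, ?_, ?_, ?_⟩
  · rw [← hL, Matrix.submatrix_mul_equiv, Matrix.submatrix_mul_equiv, h1]
  · conv_lhs => rw [← hL]
    rw [Matrix.submatrix_mul_equiv, Matrix.submatrix_mul_equiv, h2]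
  · rw [← hL, Matrix.submatrix_mul_equiv, Matrix.transpose_submatrix, h3]
  · rw [← hL, Matrix.submatrix_mul_equiv, Matrix.transpose_submatrix, h4]

theorem lp_invariant {V : Type*} [Fintype V] [DecidableEq V] {L Lp : Matrix V V ℝ}
    (h : IsMoorePenrose L Lp) (e : V ≃ V) (hL : ∀ u v, L (e u) (e v) = L u v)
    (u v : V) : Lp (e u) (e v) = Lp u v := by
  have hLs : L.submatrix e e = L := by ext a b; simp [Matrix.submatrix_apply, hL]
  have := mp_unique (mp_submatrix h e hLs) h
  have := congrFun (congrFun this u) v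
  simpa [Matrix.submatrix_apply] using this

/-! ### Permutation-induced automorphisms -/

variable {n d : ℕ}

/-- vertex equiv induced by a permutation of the ground set -/
def jEquiv (σ : Equiv.Perm (Fin n)) :
    {s : Finset (Fin n) // s.card = d} ≃ {s : Finset (Fin n) // s.card = d} :=
  σ.finsetCongr.subtypeEquiv (fun s => by rw [Equiv.finsetCongr_apply, Finset.card_map])

lemma jEquiv_coe (σ : Equiv.Perm (Fin n)) (s : {s : Finset (Fin n) // s.card = d}) :
    (jEquiv σ s).1 = s.1.map σ.toEmbedding := rfl

lemma jEquiv_adj (σ : Equiv.Perm (Fin n)) (s t : {s : Finset (Fin n) // s.card = d}) :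
    (johnsonGraph n d).Adj (jEquiv σ s) (jEquiv σ t) ↔ (johnsonGraph n d).Adj s t := by
  rw [johnsonGraph_adj, johnsonGraph_adj]
  rw [jEquiv_coe, jEquiv_coe, ← Finset.map_inter, Finset.card_map]
  constructor
  · rintro ⟨h1, h2⟩; exact ⟨h1, fun h => h2 (by rw [h])⟩
  · rintro ⟨h1, h2⟩; exact ⟨h1, fun h => h2 ((jEquiv σ).injective h)⟩

/-- A permutation mapping s onto t, given equal cards. -/
noncomputable def permOf (s t : Finset (Fin n)) (h : s.card = t.card) :
    Equiv.Perm (Fin n) :=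
  have e1 : {x // x ∈ s} ≃ {x // x ∈ t} := Fintype.equivOfCardEq (by
    simp [Fintype.card_coe, h])
  have e2 : {x // ¬ x ∈ s} ≃ {x // ¬ x ∈ t} := Fintype.equivOfCardEq (by
    rw [Fintype.card_subtype_compl, Fintype.card_subtype_compl]
    simp [Fintype.card_coe, h])
  (Equiv.sumCompl (· ∈ s)).symm.trans ((e1.sumCongr e2).trans (Equiv.sumCompl (· ∈ t)))

lemma permOf_mem (s t : Finset (Fin n)) (h : s.card = t.card) {x : Fin n}
    (hx : x ∈ s) : permOf s t h x ∈ t := by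
  unfold permOf
  simp only [Equiv.trans_apply]
  rw [Equiv.sumCompl_symm_apply_of_pos hx]
  simp only [Equiv.sumCongr_apply, Sum.map_inl, Equiv.sumCompl_apply_inl]
  exact Subtype.mem _

lemma permOf_image (s t : Finset (Fin n)) (h : s.card = t.card) :
    s.image (permOf s t h) = t := by
  apply Finset.eq_of_subset_of_card_le
  · intro y hy
    obtain ⟨x, hx, rfl⟩ := Finset.mem_image.mp hy
    exact permOf_mem s t h hx
  · rw [Finset.card_image_of_injective _ (permOf s t h).injective, h]

/-! ### swap-based stabilizer permutations -/

open Equiv in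
lemma swap_image_self {s : Finset (Fin n)} {x x' : Fin n} (hx : x ∈ s) (hx' : x' ∈ s) :
    s.image (swap x x') = s := by
  apply Finset.eq_of_subset_of_card_le
  · intro b hb
    obtain ⟨a, ha, rfl⟩ := Finset.mem_image.mp hb
    rcases eq_or_ne a x with rfl | h1
    · rwa [swap_apply_left]
    rcases eq_or_ne a x' with rfl | h2
    · rwa [swap_apply_right]
    · rwa [swap_apply_of_ne_of_ne h1 h2]
  · rw [Finset.card_image_of_injective _ (swap x x').injective]

lemma image_of_fixed {s : Finset (Fin n)} {f : Fin n → Fin n} (h : ∀ a ∈ s, f a = a) :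
    s.image f = s := by
  rw [Finset.image_congr (g := id) (fun a ha => h a (by simpa using ha)), Finset.image_id]

open Equiv in
/-- stabilizer transitivity on neighbors -/
lemma stab_perm {s : Finset (Fin n)} {x x' y y' : Fin n}
    (hx : x ∈ s) (hx' : x' ∈ s) (hy : y ∉ s) (hy' : y' ∉ s) :
    ∃ σ : Equiv.Perm (Fin n), s.image σ = s ∧
      (insert y (s.erase x)).image σ = insert y' (s.erase x') := by
  refine ⟨(swap x x').trans (swap y y'), ?_, ?_⟩
  · rw [show ((swap x x').trans (swap y y') : Fin n → Fin n)
        = (swap y y') ∘ (swap x x') from rfl, ← Finset.image_image,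
      swap_image_self hx hx']
    exact image_of_fixed (fun a ha => swap_apply_of_ne_of_ne
      (fun h => hy (h ▸ ha)) (fun h => hy' (h ▸ ha)))
  · rw [show ((swap x x').trans (swap y y') : Fin n → Fin n)
        = (swap y y') ∘ (swap x x') from rfl, ← Finset.image_image]
    have h1 : (insert y (s.erase x)).image (swap x x') = insert y (s.erase x') := by
      rw [Finset.image_insert,
        swap_apply_of_ne_of_ne (fun h => hy (by rw [h]; exact hx))
          (fun h => hy (by rw [h]; exact hx')),
        Finset.image_erase (swap x x').injective, swap_image_self hx hx', swap_apply_left]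
    rw [h1, Finset.image_insert, swap_apply_left]
    congr 1
    exact image_of_fixed (fun a ha => swap_apply_of_ne_of_ne
      (fun h => hy (h ▸ Finset.mem_of_mem_erase ha))
      (fun h => hy' (h ▸ Finset.mem_of_mem_erase ha)))

/-- neighbor normal form -/
lemma neighbor_form {s t : Finset (Fin n)} (hs : s.card = d) (ht : t.card = d)
    (hc : (s ∩ t).card = d - 1) (hne : s ≠ t) :
    ∃ x y, x ∈ s ∧ x ∉ t ∧ y ∈ t ∧ y ∉ s ∧ t = insert y (s.erase x) := by
  have hd : 1 ≤ d := by
    by_contra h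
    have hd0 : d = 0 := by omega
    subst hd0
    exact hne (by rw [Finset.card_eq_zero] at hs ht; rw [hs, ht])
  have hst : (s \ t).card = 1 := by
    have := Finset.card_sdiff_add_card_inter s t
    omega
  have hts : (t \ s).card = 1 := by
    have := Finset.card_sdiff_add_card_inter t s
    rw [Finset.inter_comm] at this
    omega
  obtain ⟨x, hxe⟩ := Finset.card_eq_one.mp hst
  obtain ⟨y, hye⟩ := Finset.card_eq_one.mp hts
  have hxs : x ∈ s := (Finset.mem_sdiff.mp (hxe ▸ Finset.mem_singleton_self x)).1
  have hxt : x ∉ t := (Finset.mem_sdiff.mp (hxe ▸ Finset.mem_singleton_self x)).2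
  have hyt : y ∈ t := (Finset.mem_sdiff.mp (hye ▸ Finset.mem_singleton_self y)).1
  have hys : y ∉ s := (Finset.mem_sdiff.mp (hye ▸ Finset.mem_singleton_self y)).2
  refine ⟨x, y, hxs, hxt, hyt, hys, ?_⟩
  ext a
  simp only [Finset.mem_insert, Finset.mem_erase]
  constructor
  · intro ha
    by_cases has : a ∈ s
    · exact Or.inr ⟨fun h => hxt (h ▸ ha), has⟩
    · have : a ∈ t \ s := Finset.mem_sdiff.mpr ⟨ha, has⟩
      rw [hye, Finset.mem_singleton] at this
      exact Or.inl this
  · rintro (rfl | ⟨hax, has⟩)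
    · exact hyt
    · by_contra hat
      have : a ∈ s \ t := Finset.mem_sdiff.mpr ⟨has, hat⟩
      rw [hxe, Finset.mem_singleton] at this
      exact hax this

/-! ### basic structure of the Johnson graph -/

lemma johnson_adj_insert {v : {s : Finset (Fin n) // s.card = d}}
    {x y : Fin n} (hx : x ∈ v.1) (hy : y ∉ v.1)
    (t : {s : Finset (Fin n) // s.card = d}) (htv : t.1 = insert y (v.1.erase x)) :
    (johnsonGraph n d).Adj v t := by
  rw [johnsonGraph_adj]
  constructor
  · rw [htv]
    have : v.1 ∩ insert y (v.1.erase x) = v.1.erase x := by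
      ext a
      simp only [Finset.mem_inter, Finset.mem_insert, Finset.mem_erase]
      constructor
      · rintro ⟨has, rfl | h⟩
        · exact absurd has hy
        · exact h
      · rintro ⟨hax, has⟩; exact ⟨has, Or.inr ⟨hax, has⟩⟩
    rw [this, Finset.card_erase_of_mem hx, v.2]
  · intro h
    rw [← h] at htv
    exact hy (htv ▸ Finset.mem_insert_self y _)

lemma johnson_card_insert {v : {s : Finset (Fin n) // s.card = d}} (hd : 1 ≤ d)
    {x y : Fin n} (hx : x ∈ v.1) (hy : y ∉ v.1) :
    (insert y (v.1.erase x)).card = d := by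
  rw [Finset.card_insert_of_notMem (fun h => hy (Finset.mem_of_mem_erase h)),
    Finset.card_erase_of_mem hx, v.2]
  omega

lemma johnson_degree (hd : 1 ≤ d) (hn : d ≤ n) (v : {s : Finset (Fin n) // s.card = d}) :
    (johnsonGraph n d).degree v = d * (n - d) := by
  classical
  rw [← SimpleGraph.card_neighborFinset_eq_degree]
  have key : (v.1 ×ˢ v.1ᶜ).card = ((johnsonGraph n d).neighborFinset v).card := by
    apply Finset.card_bij (fun p hp =>
      ⟨insert p.2 (v.1.erase p.1), by
        have hp' := Finset.mem_product.mp hp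
        exact johnson_card_insert hd hp'.1 (Finset.mem_compl.mp hp'.2)⟩)
    · intro p hp
      have hp' := Finset.mem_product.mp hp
      rw [SimpleGraph.mem_neighborFinset]
      exact johnson_adj_insert hp'.1 (Finset.mem_compl.mp hp'.2) _ rfl
    · intro p hp q hq hpq
      have hp' := Finset.mem_product.mp hp
      have hq' := Finset.mem_product.mp hq
      have hpv := Finset.mem_compl.mp hp'.2
      have hqv := Finset.mem_compl.mp hq'.2
      have heq : insert p.2 (v.1.erase p.1) = insert q.2 (v.1.erase q.1) :=
        congrArg Subtype.val hpq
      have hy : p.2 = q.2 := by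
        have h2 : p.2 ∈ insert q.2 (v.1.erase q.1) := heq ▸ Finset.mem_insert_self _ _
        rcases Finset.mem_insert.mp h2 with h | h
        · exact h
        · exact absurd (Finset.mem_of_mem_erase h) hpv
      have hx : p.1 = q.1 := by
        have h1 : p.1 ∉ insert p.2 (v.1.erase p.1) := by
          simp only [Finset.mem_insert, Finset.mem_erase]
          push_neg
          exact ⟨fun h => hpv (h ▸ hp'.1), fun h _ => h rfl⟩
        rw [heq] at h1
        simp only [Finset.mem_insert, Finset.mem_erase] at h1
        push_neg at h1
        by_contra hne
        exact absurd hp'.1 (h1.2 hne)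
      exact Prod.ext hx hy
    · intro t ht
      rw [SimpleGraph.mem_neighborFinset] at ht
      obtain ⟨x, y, hxs, hxt, hyt, hys, hform⟩ :=
        neighbor_form v.2 t.2 (johnsonGraph_adj.mp ht).1 (fun h => (johnsonGraph_adj.mp ht).2 (Subtype.ext h))
      exact ⟨(x, y), Finset.mem_product.mpr ⟨hxs, Finset.mem_compl.mpr hys⟩,
        Subtype.ext hform.symm⟩
  rw [← key, Finset.card_product, Finset.card_compl, Fintype.card_fin, v.2]

lemma johnson_reachable (s t : {s : Finset (Fin n) // s.card = d}) :
    (johnsonGraph n d).Reachable s t := by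
  generalize hk : (s.1 \ t.1).card = k
  induction k generalizing s with
  | zero =>
    have hsub : s.1 ⊆ t.1 := by
      rw [Finset.card_eq_zero, Finset.sdiff_eq_empty_iff_subset] at hk
      exact hk
    have : s = t := Subtype.ext (Finset.eq_of_subset_of_card_le hsub (by rw [s.2, t.2]))
    exact this ▸ SimpleGraph.Reachable.refl s
  | succ k ih =>
    have hne : s.1 ≠ t.1 := by
      intro h
      rw [h, Finset.sdiff_self, Finset.card_empty] at hk
      omega
    obtain ⟨x, hx⟩ := Finset.card_pos.mp (by omega : 0 < (s.1 \ t.1).card)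
    have hxs : x ∈ s.1 := (Finset.mem_sdiff.mp hx).1
    have hxt : x ∉ t.1 := (Finset.mem_sdiff.mp hx).2
    have hd1 : 1 ≤ d := by
      have h := Finset.card_pos.mpr ⟨x, hxs⟩
      rw [s.2] at h
      exact h
    have hts : (t.1 \ s.1).Nonempty := by
      rw [← Finset.card_pos]
      have h1 := Finset.card_sdiff_add_card_inter s.1 t.1
      have h2 := Finset.card_sdiff_add_card_inter t.1 s.1
      rw [Finset.inter_comm] at h2
      rw [s.2] at h1; rw [t.2] at h2
      omega
    obtain ⟨y, hy⟩ := hts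
    have hyt : y ∈ t.1 := (Finset.mem_sdiff.mp hy).1
    have hys : y ∉ s.1 := (Finset.mem_sdiff.mp hy).2
    set s' : {s : Finset (Fin n) // s.card = d} :=
      ⟨insert y (s.1.erase x), johnson_card_insert hd1 hxs hys⟩ with hs'def
    have hadj : (johnsonGraph n d).Adj s s' := johnson_adj_insert hxs hys s' rfl
    have hcard : (s'.1 \ t.1).card = k := by
      have : s'.1 \ t.1 = (s.1 \ t.1).erase x := by
        ext a
        simp only [hs'def, Finset.mem_sdiff, Finset.mem_insert, Finset.mem_erase]
        constructor
        · rintro ⟨rfl | ⟨hax, has⟩, hat⟩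
          · exact absurd hyt hat
          · exact ⟨hax, has, hat⟩
        · rintro ⟨hax, has, hat⟩
          exact ⟨Or.inr ⟨hax, has⟩, hat⟩
      rw [this, Finset.card_erase_of_mem hx, hk]
      omega
    exact (hadj.reachable).trans (ih s' hcard)
lemma lapQ_diag {V : Type*} [Fintype V] [DecidableEq V] [Nonempty V]
    {G : SimpleGraph V} [DecidableRel G.Adj]
    (hconn : ∀ u v : V, G.Reachable u v) {Lp : Matrix V V ℝ}
    (h : IsMoorePenrose (G.lapMatrix ℝ) Lp) (α : V) :
    (Lp * G.lapMatrix ℝ) α α = 1 - 1 / (Fintype.card V : ℝ) := by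
  classical
  set L : Matrix V V ℝ := G.lapMatrix ℝ with hLdef
  obtain ⟨h1, h2, h3, h4⟩ := h
  have hLsymm : Lᵀ = L := G.isSymm_lapMatrix (R := ℝ)
  set Q : Matrix V V ℝ := Lp * L with hQdef
  have hQL : Q * L = L := by
    have hLQ : L * Q = L := by rw [hQdef, ← Matrix.mul_assoc, h1]
    calc Q * L = (Lᵀ * Qᵀ)ᵀ := by rw [Matrix.transpose_mul, Matrix.transpose_transpose,
        Matrix.transpose_transpose]
    _ = (L * Q)ᵀ := by rw [hLsymm, h4]
    _ = L := by rw [hLQ, hLsymm]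
  -- the linear map
  set f : (V → ℝ) →ₗ[ℝ] (V → ℝ) := Matrix.toLin' L with hfdef
  have hone : (fun _ => (1:ℝ)) ∈ LinearMap.ker f := by
    rw [LinearMap.mem_ker, hfdef, Matrix.toLin'_apply]
    exact G.lapMatrix_mulVec_const_eq_zero
  have hker : LinearMap.ker f = Submodule.span ℝ {(fun _ => (1:ℝ) : V → ℝ)} := by
    apply le_antisymm
    · intro x hx
      rw [LinearMap.mem_ker, hfdef, Matrix.toLin'_apply] at hx
      have hc := (G.lapMatrix_mulVec_eq_zero_iff_forall_reachable (x := x)).mp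
        hx
      obtain ⟨i₀⟩ := ‹Nonempty V›
      have : x = x i₀ • (fun _ => (1:ℝ)) := by
        funext j; simp [hc j i₀ (hconn j i₀)]
      rw [this]
      exact Submodule.smul_mem _ _ (Submodule.mem_span_singleton_self _)
    · rw [Submodule.span_singleton_le_iff_mem]
      exact hone
  -- sum functional
  set sumL : (V → ℝ) →ₗ[ℝ] ℝ :=
    { toFun := fun x => ∑ v, x v
      map_add' := by intro x y; simp [Finset.sum_add_distrib]
      map_smul' := by intro c x; simp [Finset.mul_sum] } with hsumdef
  have hN : (0:ℝ) < (Fintype.card V : ℝ) := by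
    exact_mod_cast Fintype.card_pos
  have hrange : LinearMap.range f = LinearMap.ker sumL := by
    have hle : LinearMap.range f ≤ LinearMap.ker sumL := by
      rintro y ⟨x, rfl⟩
      rw [LinearMap.mem_ker, hsumdef]
      show ∑ v, (f x) v = 0
      rw [hfdef]
      simp only [Matrix.toLin'_apply, Matrix.mulVec, dotProduct]
      rw [Finset.sum_comm]
      apply Finset.sum_eq_zero
      intro u _
      rw [← Finset.sum_mul]
      have : ∑ v, L v u = 0 := by
        have hmv := congrFun (G.lapMatrix_mulVec_const_eq_zero (R := ℝ)) u
        simp only [Matrix.mulVec, dotProduct, mul_one, Pi.zero_apply] at hmv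
        rw [show ∑ v, L v u = ∑ v, L u v from
          Finset.sum_congr rfl (fun v _ => Matrix.IsSymm.apply (by rw [Matrix.IsSymm]; exact hLsymm) u v)]
        exact hmv
      rw [this, zero_mul]
    have hsurj : Function.Surjective sumL := by
      intro c
      refine ⟨fun _ => c / (Fintype.card V : ℝ), ?_⟩
      show ∑ _v : V, c / (Fintype.card V : ℝ) = c
      rw [Finset.sum_const, Finset.card_univ, nsmul_eq_mul]
      field_simp
    have hfr1 : Module.finrank ℝ (LinearMap.ker sumL) = Fintype.card V - 1 := by
      have := LinearMap.finrank_range_add_finrank_ker sumL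
      rw [LinearMap.range_eq_top.mpr hsurj] at this
      simp only [finrank_top, Module.finrank_self] at this
      rw [Module.finrank_fintype_fun_eq_card] at this
      omega
    have hfr2 : Module.finrank ℝ (LinearMap.range f) = Fintype.card V - 1 := by
      have := LinearMap.finrank_range_add_finrank_ker f
      rw [hker, finrank_span_singleton (by
        intro hcontr
        have := congrFun hcontr (Classical.arbitrary V)
        simp at this)] at this
      rw [Module.finrank_fintype_fun_eq_card] at this
      omega
    exact Submodule.eq_of_le_of_finrank_le hle (by rw [hfr1, hfr2])
  -- Q fixes range f
  have hQfix : ∀ y : V → ℝ, (∑ v, y v) = 0 → Q *ᵥ y = y := by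
    intro y hy
    have : y ∈ LinearMap.range f := by
      rw [hrange, LinearMap.mem_ker]; exact hy
    obtain ⟨x, rfl⟩ := this
    rw [hfdef, Matrix.toLin'_apply, Matrix.mulVec_mulVec, hQL]
  have hQ1 : Q *ᵥ (fun _ => (1:ℝ)) = 0 := by
    rw [hQdef, ← Matrix.mulVec_mulVec]
    rw [show (G.lapMatrix ℝ) = L from rfl] at *
    rw [G.lapMatrix_mulVec_const_eq_zero, Matrix.mulVec_zero]
  -- evaluate at Pi.single
  set e : V → ℝ := Pi.single α 1 with hedef
  have hsum_e : ∑ v, e v = 1 := by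
    rw [hedef]; simp
  have hdecomp : Q *ᵥ e = e - (1 / (Fintype.card V : ℝ)) • (fun _ => (1:ℝ)) := by
    have hy : ∑ v, (e - (1 / (Fintype.card V : ℝ)) • (fun _ => (1:ℝ)) : V → ℝ) v = 0 := by
      simp only [Pi.sub_apply, Pi.smul_apply, smul_eq_mul, mul_one, Finset.sum_sub_distrib,
        hsum_e]
      rw [Finset.sum_const, Finset.card_univ, nsmul_eq_mul]
      field_simp
      ring
    have := hQfix _ hy
    calc Q *ᵥ e = Q *ᵥ (e - (1 / (Fintype.card V : ℝ)) • (fun _ => (1:ℝ)))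
        + (1 / (Fintype.card V : ℝ)) • (Q *ᵥ (fun _ => (1:ℝ))) := by
          rw [Matrix.mulVec_sub, Matrix.mulVec_smul]
          abel
    _ = e - (1 / (Fintype.card V : ℝ)) • (fun _ => (1:ℝ)) := by
          rw [this, hQ1, smul_zero, add_zero]
  have heval : (Q *ᵥ e) α = Q α α := by
    rw [hedef, Matrix.mulVec_single]
    simp
  rw [← heval, hdecomp]
  simp [hedef]

set_option maxHeartbeats 2000000

/-- For the Johnson graph `J(n,d)` (`2 ≤ 2d ≤ n`) with unit resistors, the effective
resistance between adjacent vertices equals `2(n! - d!(n-d)!)/(d(n-d) n!)`. -/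
theorem johnson_adjacent_resistance (n d : ℕ) (hd : 1 ≤ d) (hn : 2 * d ≤ n)
    (Lp : Matrix {s : Finset (Fin n) // s.card = d} {s : Finset (Fin n) // s.card = d} ℝ)
    (hLp : IsMoorePenrose ((johnsonGraph n d).lapMatrix ℝ) Lp)
    (α β : {s : Finset (Fin n) // s.card = d}) (hadj : (johnsonGraph n d).Adj α β) :
    effRes Lp α β =
      2 * ((n.factorial : ℝ) - (d.factorial : ℝ) * ((n - d).factorial : ℝ)) /
        ((d : ℝ) * ((n : ℝ) - (d : ℝ)) * (n.factorial : ℝ)) := by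
  classical
  have hdn : d ≤ n := by omega
  set G := johnsonGraph n d with hG
  set L := G.lapMatrix ℝ with hLdef
  haveI hne : Nonempty {s : Finset (Fin n) // s.card = d} := by
    obtain ⟨t, -, ht⟩ := Finset.exists_subset_card_eq (s := (Finset.univ : Finset (Fin n))) (n := d)
      (by simpa using hdn)
    exact ⟨⟨t, ht⟩⟩
  -- entrywise formula for the Laplacian
  have hL_apply : ∀ u v, L u v =
      (if u = v then ((d * (n - d) : ℕ) : ℝ) else 0) - (if G.Adj u v then 1 else 0) := by
    intro u v
    rw [hLdef, SimpleGraph.lapMatrix, Matrix.sub_apply, SimpleGraph.degMatrix,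
      Matrix.diagonal_apply, SimpleGraph.adjMatrix_apply]
    congr 1
    by_cases h : u = v
    · subst h
      simp
      exact_mod_cast (by convert johnson_degree hd hdn u : G.degree u = d * (n - d))
    · simp [h]
  -- invariance of L under permutation automorphisms
  have hLinv : ∀ (σ : Equiv.Perm (Fin n)) (u v : {s : Finset (Fin n) // s.card = d}),
      L (jEquiv σ u) (jEquiv σ v) = L u v := by
    intro σ u v
    rw [hL_apply, hL_apply]
    rw [if_congr (Equiv.apply_eq_iff_eq (jEquiv σ)) rfl rfl,
      if_congr (jEquiv_adj σ u v) rfl rfl]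
  -- invariance of Lp
  have hLpinv : ∀ (σ : Equiv.Perm (Fin n)) (u v : {s : Finset (Fin n) // s.card = d}),
      Lp (jEquiv σ u) (jEquiv σ v) = Lp u v :=
    fun σ u v => lp_invariant hLp (jEquiv σ) (hLinv σ) u v
  -- diag entries of Lp are constant
  have hdiag : ∀ u v : {s : Finset (Fin n) // s.card = d}, Lp u u = Lp v v := by
    intro u v
    have hcards : u.1.card = v.1.card := by rw [u.2, v.2]
    set σ := permOf u.1 v.1 hcards
    have himg : jEquiv σ u = v := by
      apply Subtype.ext
      rw [jEquiv_coe, Finset.map_eq_image]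
      exact permOf_image u.1 v.1 hcards
    have := hLpinv σ u u
    rw [himg] at this
    exact this.symm
  -- all neighbors of α give the same effective resistance
  have hnbr : ∀ β', G.Adj α β' → effRes Lp α β' = effRes Lp α β := by
    intro β' hadj'
    obtain ⟨x, y, hxs, hxt, hyt, hys, hform⟩ :=
      neighbor_form α.2 β.2 (johnsonGraph_adj.mp hadj).1 (fun h => (johnsonGraph_adj.mp hadj).2 (Subtype.ext h))
    obtain ⟨x', y', hxs', hxt', hyt', hys', hform'⟩ :=
      neighbor_form α.2 β'.2 (johnsonGraph_adj.mp hadj').1 (fun h => (johnsonGraph_adj.mp hadj').2 (Subtype.ext h))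
    obtain ⟨σ, hσ1, hσ2⟩ := stab_perm hxs hxs' hys hys'
    have hα : jEquiv σ α = α := by
      apply Subtype.ext
      rw [jEquiv_coe, Finset.map_eq_image]
      exact hσ1
    have hβ : jEquiv σ β = β' := by
      apply Subtype.ext
      rw [jEquiv_coe, Finset.map_eq_image]
      simp only [Equiv.coe_toEmbedding]
      rw [hform, hσ2, ← hform']
    have e1 := hLpinv σ α β
    rw [hα, hβ] at e1
    have e2 := hdiag β' β
    unfold effRes
    rw [e1, e2]
  -- the sum over neighbors
  have hdeg : G.degree α = d * (n - d) := johnson_degree hd hdn α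
  have hsum : ∑ β' ∈ G.neighborFinset α, effRes Lp α β' = 2 * ((Lp * L) α α) := by
    have lhs1 : ∑ β' ∈ G.neighborFinset α, effRes Lp α β'
        = ∑ β' ∈ G.neighborFinset α, (2 * Lp α α - 2 * Lp α β') := by
      apply Finset.sum_congr rfl
      intro β' hβ'
      rw [SimpleGraph.mem_neighborFinset] at hβ'
      unfold effRes
      rw [hdiag β' α]
      ring
    rw [lhs1, Finset.sum_sub_distrib, Finset.sum_const,
      SimpleGraph.card_neighborFinset_eq_degree, hdeg, ← Finset.mul_sum]
    have rhs1 : (Lp * L) α α = Lp α α * ((d * (n - d) : ℕ) : ℝ)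
        - ∑ β' ∈ G.neighborFinset α, Lp α β' := by
      rw [Matrix.mul_apply]
      have : ∀ v, Lp α v * L v α
          = Lp α v * (if v = α then ((d * (n - d) : ℕ) : ℝ) else 0)
            - (if G.Adj α v then Lp α v else 0) := by
        intro v
        rw [hL_apply, mul_sub]
        congr 1
        rw [if_congr (G.adj_comm v α) rfl rfl]
        split_ifs with h <;> simp
      rw [Finset.sum_congr rfl (fun v _ => this v), Finset.sum_sub_distrib]
      congr 1
      · rw [Finset.sum_eq_single α]
        · simp
        · intro b _ hb
          simp [hb]
        · intro h
          exact absurd (Finset.mem_univ α) h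
      · rw [SimpleGraph.neighborFinset_eq_filter, Finset.sum_filter]
    rw [rhs1]
    push_cast
    ring
  -- the diagonal of Lp * L
  have hQ : (Lp * L) α α = 1 - 1 / (Fintype.card {s : Finset (Fin n) // s.card = d} : ℝ) :=
    lapQ_diag (fun u v => johnson_reachable u v) hLp α
  -- the sum is constant
  have hconstsum : ∑ β' ∈ G.neighborFinset α, effRes Lp α β'
      = ((d * (n - d) : ℕ) : ℝ) * effRes Lp α β := by
    rw [Finset.sum_congr rfl (fun β' hβ' => hnbr β'
      ((SimpleGraph.mem_neighborFinset _ _ _).mp hβ')), Finset.sum_const,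
      SimpleGraph.card_neighborFinset_eq_degree, hdeg, nsmul_eq_mul]
  -- numeric data
  have hcard : (Fintype.card {s : Finset (Fin n) // s.card = d} : ℝ) = (n.choose d : ℝ) := by
    rw [Fintype.card_finset_len, Fintype.card_fin]
  have hchoose : ((n.choose d : ℕ) : ℝ) * ((d.factorial : ℕ) : ℝ)
      * (((n - d).factorial : ℕ) : ℝ) = ((n.factorial : ℕ) : ℝ) := by
    exact_mod_cast congrArg (Nat.cast : ℕ → ℝ)
      (Nat.choose_mul_factorial_mul_factorial hdn)
  have hchoosepos : (0:ℝ) < (n.choose d : ℝ) := by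
    exact_mod_cast Nat.choose_pos hdn
  have hκpos : (0:ℝ) < ((d * (n - d) : ℕ) : ℝ) := by
    have : 0 < d * (n - d) := Nat.mul_pos hd (by omega)
    exact_mod_cast this
  have hfacpos : (0:ℝ) < (n.factorial : ℝ) := by exact_mod_cast n.factorial_pos
  have hdfacpos : (0:ℝ) < (d.factorial : ℝ) := by exact_mod_cast d.factorial_pos
  have hndfacpos : (0:ℝ) < ((n - d).factorial : ℝ) := by exact_mod_cast (n - d).factorial_pos
  have hkey : ((d * (n - d) : ℕ) : ℝ) * effRes Lp α β
      = 2 * (1 - 1 / (n.choose d : ℝ)) := by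
    rw [← hconstsum, hsum, hQ, hcard]

  have hcast : ((d * (n - d) : ℕ) : ℝ) = (d : ℝ) * ((n : ℝ) - (d : ℝ)) := by
    push_cast [Nat.cast_sub hdn]
    ring
  rw [hcast] at hkey hκpos
  rw [eq_div_iff (by positivity)]
  have expand : 2 * ((n.factorial : ℝ) - (d.factorial : ℝ) * ((n - d).factorial : ℝ))
      = (2 * (1 - 1 / (n.choose d : ℝ))) * (n.factorial : ℝ) := by
    rw [← hchoose]
    field_simp
  rw [expand, ← hkey]
  ring
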